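/- Let κ ∈ ℝ, let a < b be reals, and let 0 < θ₀ < b − a. Suppose u : [a,b] → ℝ satisfies the κ-concavity inequality for all pairs x, y ∈ [a,b] with 0 < y − x < θ₀ and all t ∈ [0,1], i.e. u((1−t)x + t y) ≥ (sin_κ((1−t)(y−x))/sin_κ(y−x))·u(x) + (sin_κ(t(y−x))/sin_κ(y−x))·u(y). Then u satisfies the same inequality for all pairs x, y ∈ [a,b] with 0 < y − x (and (y−x)·√κ < π when κ > 0) and all t ∈ [0,1]. -/

import Mathlib

open Real Set

/-- The generalized sine function `sin_κ`. -/
noncomputable def sinK (κ x : ℝ) : ℝ :=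
  if κ < 0 then Real.sinh (Real.sqrt (-κ) * x) / Real.sqrt (-κ)
  else if κ = 0 then x
  else Real.sin (Real.sqrt κ * x) / Real.sqrt κ

/-- `u` satisfies the κ-concavity inequality (`u'' + κ u ≤ 0`) on the set `s`. -/
def KConcIneqOn (κ : ℝ) (u : ℝ → ℝ) (s : Set ℝ) : Prop :=
  ∀ x ∈ s, ∀ y ∈ s, 0 < y - x → (0 < κ → (y - x) * Real.sqrt κ < Real.pi) →
    ∀ t ∈ Set.Icc (0:ℝ) 1,
      u ((1 - t) * x + t * y) ≥
        (sinK κ ((1 - t) * (y - x)) / sinK κ (y - x)) * u x +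
        (sinK κ (t * (y - x)) / sinK κ (y - x)) * u y

lemma sin_aux (A B C : ℝ) : Real.sin A * Real.sin (A+B+C) + Real.sin B * Real.sin C
    = Real.sin (A+C) * Real.sin (A+B) := by
  simp only [Real.sin_add, Real.cos_add]
  linear_combination (-(Real.sin B * Real.sin C)) * Real.sin_sq_add_cos_sq A

lemma sinh_aux (A B C : ℝ) : Real.sinh A * Real.sinh (A+B+C) + Real.sinh B * Real.sinh C
    = Real.sinh (A+C) * Real.sinh (A+B) := by
  simp only [Real.sinh_add, Real.cosh_add]
  linear_combination (-(Real.sinh B * Real.sinh C)) * Real.cosh_sq A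

lemma sinK_zero (κ : ℝ) : sinK κ 0 = 0 := by
  unfold sinK; split_ifs <;> simp

lemma sinK_pos {κ x : ℝ} (hx : 0 < x) (hang : 0 < κ → x * Real.sqrt κ < Real.pi) :
    0 < sinK κ x := by
  unfold sinK
  split_ifs with h1 h2
  · exact div_pos (Real.sinh_pos_iff.2 (mul_pos (Real.sqrt_pos.2 (by linarith)) hx))
      (Real.sqrt_pos.2 (by linarith))
  · exact hx
  · have hκ : 0 < κ := lt_of_le_of_ne (not_lt.1 h1) (Ne.symm h2)
    have hs : 0 < Real.sqrt κ := Real.sqrt_pos.2 hκ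
    exact div_pos (Real.sin_pos_of_pos_of_lt_pi (mul_pos hs hx)
      (by rw [mul_comm]; exact hang hκ)) hs

/-- The key addition identity in difference form. -/
lemma sinK_ident (κ x m z y : ℝ) :
    sinK κ (z-m) * sinK κ (y-x) + sinK κ (m-x) * sinK κ (y-z)
      = sinK κ (y-m) * sinK κ (z-x) := by
  unfold sinK
  split_ifs with h1 h2
  · have hc : Real.sqrt (-κ) ≠ 0 := (Real.sqrt_pos.2 (by linarith)).ne'
    have h := sinh_aux (Real.sqrt (-κ)*(z-m)) (Real.sqrt (-κ)*(m-x)) (Real.sqrt (-κ)*(y-z))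
    rw [show Real.sqrt (-κ)*(z-m) + Real.sqrt (-κ)*(m-x) + Real.sqrt (-κ)*(y-z)
        = Real.sqrt (-κ)*(y-x) from by ring,
       show Real.sqrt (-κ)*(z-m) + Real.sqrt (-κ)*(y-z) = Real.sqrt (-κ)*(y-m) from by ring,
       show Real.sqrt (-κ)*(z-m) + Real.sqrt (-κ)*(m-x) = Real.sqrt (-κ)*(z-x) from by ring] at h
    field_simp
    linear_combination h
  · ring
  · have hκ : 0 < κ := lt_of_le_of_ne (not_lt.1 h1) (Ne.symm h2)
    have hc : Real.sqrt κ ≠ 0 := (Real.sqrt_pos.2 hκ).ne'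
    have h := sin_aux (Real.sqrt κ*(z-m)) (Real.sqrt κ*(m-x)) (Real.sqrt κ*(y-z))
    rw [show Real.sqrt κ*(z-m) + Real.sqrt κ*(m-x) + Real.sqrt κ*(y-z)
        = Real.sqrt κ*(y-x) from by ring,
       show Real.sqrt κ*(z-m) + Real.sqrt κ*(y-z) = Real.sqrt κ*(y-m) from by ring,
       show Real.sqrt κ*(z-m) + Real.sqrt κ*(m-x) = Real.sqrt κ*(z-x) from by ring] at h
    field_simp
    linear_combination h

lemma glueB (κ : ℝ) (u : ℝ → ℝ) {x m z y : ℝ} (h1 : x < m) (h2 : m < z) (h3 : z < y)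
    (hang : 0 < κ → (y - x) * Real.sqrt κ < Real.pi)
    (H1 : u m * sinK κ (z-x) ≥ sinK κ (z-m) * u x + sinK κ (m-x) * u z)
    (H2 : u z * sinK κ (y-m) ≥ sinK κ (y-z) * u m + sinK κ (z-m) * u y) :
    u m * sinK κ (y-x) ≥ sinK κ (y-m) * u x + sinK κ (m-x) * u y := by
  have hs := Real.sqrt_nonneg κ
  have ang : ∀ w : ℝ, 0 < w → w ≤ y - x → (0 < κ → w * Real.sqrt κ < Real.pi) :=
    fun w _ hw' hκ => lt_of_le_of_lt (mul_le_mul_of_nonneg_right hw' hs) (hang hκ)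
  have hq : 0 < sinK κ (z-m) := sinK_pos (by linarith) (ang _ (by linarith) (by linarith))
  have hp : 0 < sinK κ (m-x) := sinK_pos (by linarith) (ang _ (by linarith) (by linarith))
  have hqr : 0 < sinK κ (y-m) := sinK_pos (by linarith) (ang _ (by linarith) (by linarith))
  have E := sinK_ident κ x m z y
  have E' : sinK κ (z-m) * sinK κ (y-x) * u m + sinK κ (m-x) * sinK κ (y-z) * u m
      = sinK κ (y-m) * sinK κ (z-x) * u m := by linear_combination u m * E
  have H1' : sinK κ (y-m) * (sinK κ (z-m) * u x + sinK κ (m-x) * u z)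
      ≤ sinK κ (y-m) * (u m * sinK κ (z-x)) := mul_le_mul_of_nonneg_left H1 hqr.le
  have H2' : sinK κ (m-x) * (sinK κ (y-z) * u m + sinK κ (z-m) * u y)
      ≤ sinK κ (m-x) * (u z * sinK κ (y-m)) := mul_le_mul_of_nonneg_left H2 hp.le
  have final : sinK κ (z-m) * (sinK κ (y-m) * u x + sinK κ (m-x) * u y)
      ≤ sinK κ (z-m) * (u m * sinK κ (y-x)) := by nlinarith [H1', H2', E']
  exact le_of_mul_le_mul_left final hq

lemma glueA (κ : ℝ) (u : ℝ → ℝ) {x z m y : ℝ} (h1 : x < z) (h2 : z < m) (h3 : m < y)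
    (hang : 0 < κ → (y - x) * Real.sqrt κ < Real.pi)
    (H1 : u z * sinK κ (m-x) ≥ sinK κ (m-z) * u x + sinK κ (z-x) * u m)
    (H2 : u m * sinK κ (y-z) ≥ sinK κ (y-m) * u z + sinK κ (m-z) * u y) :
    u m * sinK κ (y-x) ≥ sinK κ (y-m) * u x + sinK κ (m-x) * u y := by
  have hs := Real.sqrt_nonneg κ
  have ang : ∀ w : ℝ, 0 < w → w ≤ y - x → (0 < κ → w * Real.sqrt κ < Real.pi) :=
    fun w _ hw' hκ => lt_of_le_of_lt (mul_le_mul_of_nonneg_right hw' hs) (hang hκ)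
  have hq : 0 < sinK κ (m-z) := sinK_pos (by linarith) (ang _ (by linarith) (by linarith))
  have hr : 0 < sinK κ (y-m) := sinK_pos (by linarith) (ang _ (by linarith) (by linarith))
  have hpq : 0 < sinK κ (m-x) := sinK_pos (by linarith) (ang _ (by linarith) (by linarith))
  have E := sinK_ident κ x z m y
  have E' : sinK κ (m-z) * sinK κ (y-x) * u m + sinK κ (z-x) * sinK κ (y-m) * u m
      = sinK κ (y-z) * sinK κ (m-x) * u m := by linear_combination u m * E
  have H1' : sinK κ (y-m) * (sinK κ (m-z) * u x + sinK κ (z-x) * u m)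
      ≤ sinK κ (y-m) * (u z * sinK κ (m-x)) := mul_le_mul_of_nonneg_left H1 hr.le
  have H2' : sinK κ (m-x) * (sinK κ (y-m) * u z + sinK κ (m-z) * u y)
      ≤ sinK κ (m-x) * (u m * sinK κ (y-z)) := mul_le_mul_of_nonneg_left H2 hpq.le
  have final : sinK κ (m-z) * (sinK κ (y-m) * u x + sinK κ (m-x) * u y)
      ≤ sinK κ (m-z) * (u m * sinK κ (y-x)) := by nlinarith [H1', H2', E']
  exact le_of_mul_le_mul_left final hq

/-- The local hypothesis in "cleared denominators" form. -/
lemma local_cleared (κ a b θ₀ : ℝ) (u : ℝ → ℝ)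
    (hloc : ∀ x ∈ Set.Icc a b, ∀ y ∈ Set.Icc a b, 0 < y - x → y - x < θ₀ →
      (0 < κ → (y - x) * Real.sqrt κ < Real.pi) →
      ∀ t ∈ Set.Icc (0:ℝ) 1,
        u ((1 - t) * x + t * y) ≥
          (sinK κ ((1 - t) * (y - x)) / sinK κ (y - x)) * u x +
          (sinK κ (t * (y - x)) / sinK κ (y - x)) * u y)
    {x m y : ℝ} (hx : x ∈ Set.Icc a b) (hy : y ∈ Set.Icc a b)
    (h1 : x < m) (h2 : m < y) (hshort : y - x < θ₀)
    (hang : 0 < κ → (y - x) * Real.sqrt κ < Real.pi) :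
    u m * sinK κ (y-x) ≥ sinK κ (y-m) * u x + sinK κ (m-x) * u y := by
  have hd : 0 < y - x := by linarith
  have hne : y - x ≠ 0 := hd.ne'
  have ht0 : (0:ℝ) ≤ (m - x)/(y - x) := div_nonneg (by linarith) hd.le
  have ht1 : (m - x)/(y - x) ≤ 1 := (div_le_one hd).2 (by linarith)
  have h := hloc x hx y hy hd hshort hang ((m - x)/(y - x)) ⟨ht0, ht1⟩
  have e1 : (1 - (m - x)/(y - x)) * x + (m - x)/(y - x) * y = m := by
    field_simp; ring
  have e2 : (1 - (m - x)/(y - x)) * (y - x) = y - m := by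
    field_simp
    ring
  have e3 : (m - x)/(y - x) * (y - x) = m - x := by
    field_simp
  rw [e1, e2, e3] at h
  have hS : 0 < sinK κ (y-x) := sinK_pos hd hang
  have h' := mul_le_mul_of_nonneg_right h hS.le
  calc sinK κ (y-m) * u x + sinK κ (m-x) * u y
      = (sinK κ (y-m)/sinK κ (y-x) * u x + sinK κ (m-x)/sinK κ (y-x) * u y)
          * sinK κ (y-x) := by field_simp
    _ ≤ u m * sinK κ (y-x) := h'

/-- Local-to-global: if `u` satisfies the κ-concavity inequality for all pairs of
points in `[a,b]` at distance less than `θ₀`, then it satisfies it for all pairs. -/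
theorem kConcIneq_of_local (κ a b θ₀ : ℝ) (hab : a < b)
    (hθ₀ : 0 < θ₀) (hθ₀' : θ₀ < b - a) (u : ℝ → ℝ)
    (hloc : ∀ x ∈ Set.Icc a b, ∀ y ∈ Set.Icc a b, 0 < y - x → y - x < θ₀ →
      (0 < κ → (y - x) * Real.sqrt κ < Real.pi) →
      ∀ t ∈ Set.Icc (0:ℝ) 1,
        u ((1 - t) * x + t * y) ≥
          (sinK κ ((1 - t) * (y - x)) / sinK κ (y - x)) * u x +
          (sinK κ (t * (y - x)) / sinK κ (y - x)) * u y) :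
    KConcIneqOn κ u (Set.Icc a b) := by
  -- the cleared inequality for triples, by induction on a step count
  have key : ∀ n : ℕ, ∀ x m y : ℝ, x ∈ Set.Icc a b → y ∈ Set.Icc a b → x < m → m < y →
      (0 < κ → (y - x) * Real.sqrt κ < Real.pi) →
      y - x - min (min (m-x) (y-m)) (θ₀/4) < θ₀/2 + n*(θ₀/4) →
      u m * sinK κ (y-x) ≥ sinK κ (y-m) * u x + sinK κ (m-x) * u y := by
    intro n
    induction n with
    | zero =>
      intro x m y hx hy h1 h2 hang hM
      have hmin : min (min (m-x) (y-m)) (θ₀/4) ≤ θ₀/4 := min_le_right _ _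
      push_cast at hM
      exact local_cleared κ a b θ₀ u hloc hx hy h1 h2 (by linarith) hang
    | succ n ih =>
      intro x m y hx hy h1 h2 hang hM
      push_cast at hM
      have hmin : min (min (m-x) (y-m)) (θ₀/4) ≤ θ₀/4 := min_le_right _ _
      by_cases hshort : y - x < θ₀
      · exact local_cleared κ a b θ₀ u hloc hx hy h1 h2 hshort hang
      · push_neg at hshort
        have hax : a ≤ x := hx.1
        have hyb : y ≤ b := hy.2
        have hs := Real.sqrt_nonneg κ
        have ang : ∀ w : ℝ, w ≤ y - x → (0 < κ → w * Real.sqrt κ < Real.pi) :=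
          fun w hw hκ => lt_of_le_of_lt (mul_le_mul_of_nonneg_right hw hs) (hang hκ)
        have hn0 : (0:ℝ) ≤ (n:ℝ) := Nat.cast_nonneg n
        rcases le_or_gt (m-x) (y-m) with hside | hside
        · -- m is in the left half, glue to the right
          have hym : θ₀/2 ≤ y - m := by linarith
          rcases le_or_gt (θ₀/4) (m-x) with hc | hc
          · -- z := m + θ₀/4
            set z := m + θ₀/4 with hz
            have hz1 : m < z := by simp only [hz]; linarith
            have hz2 : z < y := by simp only [hz]; linarith
            have hzm : z - m = θ₀/4 := by simp only [hz]; ring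
            have hzI : z ∈ Set.Icc a b := ⟨by linarith, by linarith⟩
            have hmI : m ∈ Set.Icc a b := ⟨by linarith, by linarith⟩
            have M1 : z - x - min (min (m-x) (z-m)) (θ₀/4) < θ₀/2 + n*(θ₀/4) := by
              rw [hzm, min_comm (m-x) (θ₀/4), min_eq_left (min_le_left _ _),
                min_eq_left hc]
              linarith
            have M2 : y - m - min (min (z-m) (y-z)) (θ₀/4) < θ₀/2 + n*(θ₀/4) := by
              rw [hzm, min_eq_left (min_le_left _ _)]
              rcases le_total (θ₀/4) (y-z) with h | h
              · rw [min_eq_left h]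
                have : y - z ≤ y - m - θ₀/4 := by simp only [hz]; linarith
                linarith
              · rw [min_eq_right h]
                have : y - m - (y - z) = θ₀/4 := by rw [← hzm]; ring
                linarith
            exact glueB κ u h1 hz1 hz2 hang
              (ih x m z hx hzI h1 hz1 (ang _ (by linarith)) M1)
              (ih m z y hmI hy hz1 hz2 (ang _ (by linarith)) M2)
          · -- z := m + θ₀/2, use hloc on (x,m,z)
            set z := m + θ₀/2 with hz
            have hym' : 3*θ₀/4 < y - m := by linarith
            have hz1 : m < z := by simp only [hz]; linarith
            have hz2 : z < y := by simp only [hz]; linarith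
            have hzm : z - m = θ₀/2 := by simp only [hz]; ring
            have hzI : z ∈ Set.Icc a b := ⟨by linarith, by linarith⟩
            have hmI : m ∈ Set.Icc a b := ⟨by linarith, by linarith⟩
            have hMeq : min (min (m-x) (y-m)) (θ₀/4) = m - x := by
              rw [min_eq_left hside, min_eq_left (by linarith)]
            rw [hMeq] at hM
            have M2 : y - m - min (min (z-m) (y-z)) (θ₀/4) < θ₀/2 + n*(θ₀/4) := by
              have hyz : θ₀/4 ≤ y - z := by simp only [hz]; linarith
              rw [hzm, min_eq_right (le_min (by linarith) hyz)]
              linarith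
            exact glueB κ u h1 hz1 hz2 hang
              (local_cleared κ a b θ₀ u hloc hx hzI h1 hz1
                (by simp only [hz]; linarith) (ang _ (by linarith)))
              (ih m z y hmI hy hz1 hz2 (ang _ (by linarith)) M2)
        · -- m is in the right half, glue to the left
          have hxm : θ₀/2 ≤ m - x := by linarith
          rcases le_or_gt (θ₀/4) (y-m) with hc | hc
          · -- z := m - θ₀/4
            set z := m - θ₀/4 with hz
            have hz1 : x < z := by simp only [hz]; linarith
            have hz2 : z < m := by simp only [hz]; linarith
            have hmz : m - z = θ₀/4 := by simp only [hz]; ring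
            have hzI : z ∈ Set.Icc a b := ⟨by linarith, by linarith⟩
            have hmI : m ∈ Set.Icc a b := ⟨by linarith, by linarith⟩
            have M1 : m - x - min (min (z-x) (m-z)) (θ₀/4) < θ₀/2 + n*(θ₀/4) := by
              have hzx : θ₀/4 ≤ z - x := by simp only [hz]; linarith
              rw [hmz, min_eq_right (le_min hzx (le_refl _))]
              linarith
            have M2 : y - z - min (min (m-z) (y-m)) (θ₀/4) < θ₀/2 + n*(θ₀/4) := by
              rw [hmz, min_eq_left (min_le_left _ _), min_eq_left hc]
              have : y - z = y - m + θ₀/4 := by rw [← hmz]; ring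
              linarith
            exact glueA κ u hz1 hz2 h2 hang
              (ih x z m hx hmI hz1 hz2 (ang _ (by linarith)) M1)
              (ih z m y hzI hy hz2 h2 (ang _ (by linarith)) M2)
          · -- z := m - θ₀/2, use hloc on (z,m,y)
            set z := m - θ₀/2 with hz
            have hxm' : 3*θ₀/4 < m - x := by linarith
            have hz1 : x < z := by simp only [hz]; linarith
            have hz2 : z < m := by simp only [hz]; linarith
            have hmz : m - z = θ₀/2 := by simp only [hz]; ring
            have hzI : z ∈ Set.Icc a b := ⟨by linarith, by linarith⟩
            have hmI : m ∈ Set.Icc a b := ⟨by linarith, by linarith⟩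
            have hMeq : min (min (m-x) (y-m)) (θ₀/4) = y - m := by
              rw [min_eq_right hside.le, min_eq_left hc.le]
            rw [hMeq] at hM
            have M1 : m - x - min (min (z-x) (m-z)) (θ₀/4) < θ₀/2 + n*(θ₀/4) := by
              have hzx : θ₀/4 ≤ z - x := by simp only [hz]; linarith
              rw [hmz, min_eq_right (le_min hzx (by linarith))]
              linarith
            exact glueA κ u hz1 hz2 h2 hang
              (ih x z m hx hmI hz1 hz2 (ang _ (by linarith)) M1)
              (local_cleared κ a b θ₀ u hloc hzI hy hz2 h2
                (by simp only [hz]; linarith) (ang _ (by linarith)))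
  -- now deduce the statement
  intro x hx y hy hxy hang t ht
  have hS : 0 < sinK κ (y-x) := sinK_pos hxy hang
  rcases eq_or_lt_of_le ht.1 with h0 | h0
  · rw [← h0]
    norm_num [sinK_zero, div_self hS.ne']
  · rcases eq_or_lt_of_le ht.2 with h1 | h1
    · rw [h1]
      norm_num [sinK_zero, div_self hS.ne']
    · set m := (1 - t) * x + t * y with hm
      have hmx : m - x = t * (y - x) := by rw [hm]; ring
      have hym : y - m = (1 - t) * (y - x) := by rw [hm]; ring
      have h1m : x < m := by nlinarith [mul_pos h0 hxy]
      have h2m : m < y := by nlinarith [mul_pos (by linarith : (0:ℝ) < 1 - t) hxy]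
      obtain ⟨n, hn⟩ := exists_nat_gt ((y - x)/(θ₀/4))
      have hn' : y - x < (n:ℝ)*(θ₀/4) := by
        rw [div_lt_iff₀ (by linarith)] at hn; linarith
      have hminpos : 0 < min (min (m-x) (y-m)) (θ₀/4) :=
        lt_min (lt_min (by linarith) (by linarith)) (by linarith)
      have H := key n x m y hx hy h1m h2m hang (by linarith)
      rw [ge_iff_le, ← hym, ← hmx, div_mul_eq_mul_div, div_mul_eq_mul_div,
        ← add_div, div_le_iff₀ hS]
      linarith [H]
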